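/- Let G be a finitely generated group in which every conjugacy class is finite. Then the center of G has finite index in G; in particular, G is abelian-by-finite. -/

import Mathlib

open Subgroup MulAction

lemma centralizer_zpowers_finiteIndex {G : Type*} [Group G]
    (hfc : ∀ g : G, Set.Finite {x : G | ∃ h : G, x = h * g * h⁻¹}) (g : G) :
    (Subgroup.centralizer (Subgroup.zpowers g : Set G)).FiniteIndex := by
  have horb : orbit (ConjAct G) g = {x : G | ∃ h : G, x = h * g * h⁻¹} := by
    ext x
    constructor
    · rintro ⟨h, rfl⟩
      exact ⟨ConjAct.ofConjAct h, by simp [ConjAct.smul_def]⟩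
    · rintro ⟨h, rfl⟩
      exact ⟨ConjAct.toConjAct h, by simp [ConjAct.smul_def]⟩
  have hfin : (orbit (ConjAct G) g).Finite := horb ▸ hfc g
  have hne : (orbit (ConjAct G) g).Nonempty := ⟨g, mem_orbit_self g⟩
  have hidx : (stabilizer (ConjAct G) g).index ≠ 0 := by
    rw [index_stabilizer]
    exact ((Set.ncard_pos hfin).mpr hne).ne'
  have hcomap : Subgroup.centralizer (Subgroup.zpowers g : Set G) =
      (stabilizer (ConjAct G) g).comap ConjAct.toConjAct.toMonoidHom := by
    rw [ConjAct.stabilizer_eq_centralizer]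
    ext x
    simp only [Subgroup.mem_comap, Subgroup.mem_centralizer_iff, MulEquiv.coe_toMonoidHom]
    constructor
    · rintro hx y hy
      rw [Set.mem_singleton_iff.mp hy]
      have := hx g (Subgroup.mem_zpowers g)
      exact congrArg ConjAct.toConjAct this
    · rintro hx y ⟨n, rfl⟩
      have := hx (ConjAct.toConjAct g) rfl
      have h2 : g * x = x * g := ConjAct.toConjAct.injective this
      exact (Commute.zpow_left (h2 : Commute g x) n).eq
  refine ⟨?_⟩
  rw [hcomap]
  erw [Subgroup.index_comap_of_surjective _ ConjAct.toConjAct.surjective]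
  exact hidx

/-- A finitely generated group in which every conjugacy class is finite has center of finite
index; in particular it is abelian-by-finite. -/
theorem center_finiteIndex_of_fg_fc {G : Type*} [Group G] (hfg : Group.FG G)
    (hfc : ∀ g : G, Set.Finite {x : G | ∃ h : G, x = h * g * h⁻¹}) :
    (Subgroup.center G).FiniteIndex ∧
      ∃ A : Subgroup G, A.FiniteIndex ∧ ∀ a ∈ A, ∀ b ∈ A, a * b = b * a := by
  obtain ⟨S, hS⟩ := hfg.out
  have hcenter : (Subgroup.center G).FiniteIndex := by
    rw [Subgroup.center_eq_iInf (s := (S : Set G)) hS]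
    exact Subgroup.finiteIndex_iInf' _ fun i _ => by
      have := centralizer_zpowers_finiteIndex hfc i
      rwa [Subgroup.zpowers_eq_closure, Subgroup.centralizer_closure] at this
  exact ⟨hcenter, Subgroup.center G, hcenter,
    fun a ha b _ => (Subgroup.mem_center_iff.mp ha b).symm⟩
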